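/- Let S_λ be a bounded left-invertible, non-analytic, balanced weighted shift on a rootless, leafless directed tree. Then ℓ²(V) decomposes as the orthogonal direct sum of the hyper-range S_λ^∞(ℓ²(V)) and the subspaces S_λ^n(ker S_λ*) for n ∈ ℕ: ℓ²(V) = S_λ^∞(ℓ²(V)) ⊕ ker S_λ* ⊕ S_λ(ker S_λ*) ⊕ S_λ²(ker S_λ*) ⊕ ⋯. -/

import Mathlib

/-- A countably infinite, leafless, rootless directed tree, encoded by its parent
function: every vertex has a child (leafless), there are no circuits, and the tree
is connected (any two vertices have a common ancestor). -/
structure RootlessTree (V : Type*) where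
  par : V → V
  leafless : ∀ u : V, ∃ w : V, par w = u
  acyclic : ∀ (u : V) (n : ℕ), 0 < n → par^[n] u ≠ u
  connected : ∀ u w : V, ∃ k l : ℕ, par^[k] u = par^[l] w

/-- `Aset T v n` is the set `A(v,n)`: `A(v,0) = {v}` and
`A(v,n) = Chi^n(par^n(v)) \ Chi^{n-1}(par^{n-1}(v))` for `n ≥ 1`. -/
def Aset {V : Type*} (T : RootlessTree V) (v : V) : ℕ → Set V
  | 0 => {v}
  | n + 1 => {w | T.par^[n + 1] w = T.par^[n + 1] v ∧ ¬ T.par^[n] w = T.par^[n] v}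

open scoped ENNReal

/-- `lamN T wt n u` is `λ⁽ⁿ⁾(u) = λ_u · λ_{par u} ⋯ λ_{parⁿ⁻¹ u}`. -/
def lamN {V : Type*} (T : RootlessTree V) (wt : V → ℝ) (n : ℕ) (u : V) : ℝ :=
  ∏ j ∈ Finset.range n, wt (T.par^[j] u)

/-- `alphaFun T wt v = α_λ(v) = Σ_{n≥0} Σ_{u ∈ A(v,n)} (λ⁽ⁿ⁾(u)/λ⁽ⁿ⁾(v))²`,
as an extended nonnegative real. -/
noncomputable def alphaFun {V : Type*} (T : RootlessTree V) (wt : V → ℝ) (v : V) : ℝ≥0∞ :=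
  ∑' n : ℕ, ∑' u : (Aset T v n), ENNReal.ofReal ((lamN T wt n u / lamN T wt n v) ^ 2)

open ContinuousLinearMap

section Helpers

variable {V : Type*} [DecidableEq V]

theorem lamN_succ (T : RootlessTree V) (wt : V → ℝ) (n : ℕ) (v : V) :
    lamN T wt (n + 1) v = wt v * lamN T wt n (T.par v) := by
  unfold lamN
  rw [Finset.prod_range_succ']
  simp only [Function.iterate_succ_apply, Function.iterate_zero_apply]
  exact mul_comm _ _

theorem powApply (T : RootlessTree V) (wt : V → ℝ)
    (S : lp (fun _ : V => ℂ) 2 →L[ℂ] lp (fun _ : V => ℂ) 2)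
    (hS : ∀ (f : lp (fun _ : V => ℂ) 2) (v : V), (S f) v = (wt v : ℂ) * f (T.par v))
    (n : ℕ) (f : lp (fun _ : V => ℂ) 2) (v : V) :
    ((S ^ n) f) v = (lamN T wt n v : ℂ) * f (T.par^[n] v) := by
  induction n generalizing v with
  | zero => simp [lamN]
  | succ n ih =>
      rw [pow_succ', ContinuousLinearMap.mul_apply, hS, ih, lamN_succ,
        Function.iterate_succ_apply]
      push_cast
      ring

theorem inner_lp_eq (f g : lp (fun _ : V => ℂ) 2) :
    (inner ℂ f g : ℂ) = ∑' x : V, (starRingEnd ℂ) (f x) * g x := by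
  rw [lp.inner_eq_tsum]
  exact tsum_congr fun x => by rw [RCLike.inner_apply]; ring

theorem adjoint_apply_coord (S : lp (fun _ : V => ℂ) 2 →L[ℂ] lp (fun _ : V => ℂ) 2)
    (g : lp (fun _ : V => ℂ) 2) (v : V) :
    (adjoint S g) v = (inner ℂ (S (lp.single 2 v (1 : ℂ))) g : ℂ) := by
  have h1 : (adjoint S g) v = (inner ℂ (lp.single 2 v (1 : ℂ)) (adjoint S g) : ℂ) := by
    rw [lp.inner_single_left]
    simp [RCLike.inner_apply]
  rw [h1, ContinuousLinearMap.adjoint_inner_right]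

theorem adjoint_apply_tsum (T : RootlessTree V) (wt : V → ℝ)
    (S : lp (fun _ : V => ℂ) 2 →L[ℂ] lp (fun _ : V => ℂ) 2)
    (hS : ∀ (f : lp (fun _ : V => ℂ) 2) (v : V), (S f) v = (wt v : ℂ) * f (T.par v))
    (g : lp (fun _ : V => ℂ) 2) (v : V) :
    (adjoint S g) v = ∑' x : V, (if T.par x = v then (wt x : ℂ) * g x else 0) := by
  rw [adjoint_apply_coord, inner_lp_eq]
  refine tsum_congr fun x => ?_
  rw [hS]
  by_cases h : T.par x = v
  · rw [if_pos h, h, lp.single_apply_self]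
    simp [Complex.conj_ofReal]
  · rw [if_neg h, lp.single_apply, Pi.single_apply, if_neg h]
    simp

end Helpers

section Helpers2

variable {V : Type*} [DecidableEq V]

set_option linter.unusedSectionVars false

noncomputable def childFn (T : RootlessTree V) : V → V := fun u => (T.leafless u).choose

theorem par_childFn (T : RootlessTree V) (u : V) : T.par (childFn T u) = u :=
  (T.leafless u).choose_spec

theorem par_iter_childFn (T : RootlessTree V) (k : ℕ) (u : V) :
    T.par^[k] ((childFn T)^[k] u) = u := by
  induction k with
  | zero => rfl
  | succ k ih =>
      rw [Function.iterate_succ_apply' (childFn T), Function.iterate_succ_apply T.par,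
        par_childFn, ih]

noncomputable def betaF (S : lp (fun _ : V => ℂ) 2 →L[ℂ] lp (fun _ : V => ℂ) 2) (u : V) : ℝ :=
  ‖S (lp.single 2 u (1 : ℂ))‖ ^ 2

theorem betaF_nonneg (S : lp (fun _ : V => ℂ) 2 →L[ℂ] lp (fun _ : V => ℂ) 2) (u : V) :
    0 ≤ betaF S u := sq_nonneg _

theorem betaF_le (S : lp (fun _ : V => ℂ) 2 →L[ℂ] lp (fun _ : V => ℂ) 2) (u : V) :
    betaF S u ≤ ‖S‖ ^ 2 := by
  have h1 := S.le_opNorm (lp.single 2 u (1 : ℂ))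
  have hp2 : (0:ℝ) < (2 : ℝ≥0∞).toReal := by norm_num
  have h2 : ‖(lp.single 2 u (1 : ℂ) : lp (fun _ : V => ℂ) 2)‖ = 1 := by
    have := lp.norm_single (E := fun _ : V => ℂ) (p := 2) (by norm_num) u (1 : ℂ)
    simpa using this
  rw [h2, mul_one] at h1
  exact pow_le_pow_left₀ (norm_nonneg _) h1 2

theorem betaF_eq_of_gen (T : RootlessTree V)
    (S : lp (fun _ : V => ℂ) 2 →L[ℂ] lp (fun _ : V => ℂ) 2)
    (hbal : ∀ u u' : V, (∃ n : ℕ, T.par^[n] u = T.par^[n] u') →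
      ‖S (lp.single 2 u (1 : ℂ))‖ = ‖S (lp.single 2 u' (1 : ℂ))‖)
    (u u' : V) (h : ∃ n : ℕ, T.par^[n] u = T.par^[n] u') : betaF S u = betaF S u' := by
  unfold betaF
  rw [hbal u u' h]

theorem betaF_tsum (T : RootlessTree V) (wt : V → ℝ)
    (S : lp (fun _ : V => ℂ) 2 →L[ℂ] lp (fun _ : V => ℂ) 2)
    (hS : ∀ (f : lp (fun _ : V => ℂ) 2) (v : V), (S f) v = (wt v : ℂ) * f (T.par v))
    (u : V) :
    ((betaF S u : ℝ) : ℂ) = ∑' x : V, (if T.par x = u then ((wt x : ℂ)) ^ 2 else 0) := by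
  have h1 : ((betaF S u : ℝ) : ℂ)
      = (inner ℂ (S (lp.single 2 u (1 : ℂ))) (S (lp.single 2 u (1 : ℂ))) : ℂ) := by
    rw [inner_self_eq_norm_sq_to_K]
    unfold betaF
    norm_cast
  rw [h1, inner_lp_eq]
  refine tsum_congr fun x => ?_
  rw [hS]
  by_cases h : T.par x = u
  · rw [if_pos h, h, lp.single_apply_self]
    simp [Complex.conj_ofReal]
    ring
  · rw [if_neg h, lp.single_apply, Pi.single_apply, if_neg h]
    simp

theorem memℓp_mul (S : lp (fun _ : V => ℂ) 2 →L[ℂ] lp (fun _ : V => ℂ) 2)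
    (b : V → ℝ) (hb0 : ∀ x, 0 ≤ b x) (hble : ∀ x, b x ≤ ‖S‖ ^ 2)
    (w : lp (fun _ : V => ℂ) 2) :
    Memℓp (fun x : V => ((b x : ℝ) : ℂ) * w x) 2 := by
  apply memℓp_gen
  have hw2 : Summable (fun x : V => ‖w x‖ ^ (2 : ℝ≥0∞).toReal) :=
    (lp.memℓp w).summable (by norm_num)
  have ht : (0 : ℝ) ≤ (2 : ℝ≥0∞).toReal := ENNReal.toReal_nonneg
  refine Summable.of_nonneg_of_le (fun x => Real.rpow_nonneg (norm_nonneg _) _)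
    (fun x => ?_) (hw2.mul_left ((‖S‖ ^ 2) ^ (2 : ℝ≥0∞).toReal))
  calc ‖((b x : ℝ) : ℂ) * w x‖ ^ (2 : ℝ≥0∞).toReal
      = (b x * ‖w x‖) ^ (2 : ℝ≥0∞).toReal := by
        rw [norm_mul, Complex.norm_real, Real.norm_eq_abs, abs_of_nonneg (hb0 x)]
    _ ≤ (‖S‖ ^ 2 * ‖w x‖) ^ (2 : ℝ≥0∞).toReal := by
        apply Real.rpow_le_rpow (mul_nonneg (hb0 x) (norm_nonneg _))
          (mul_le_mul_of_nonneg_right (hble x) (norm_nonneg _)) ht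
    _ = (‖S‖ ^ 2) ^ (2 : ℝ≥0∞).toReal * ‖w x‖ ^ (2 : ℝ≥0∞).toReal :=
        Real.mul_rpow (sq_nonneg _) (norm_nonneg _)

end Helpers2

section Key

variable {V : Type*} [DecidableEq V]

set_option linter.unusedSectionVars false

theorem keyF2 (T : RootlessTree V) (wt : V → ℝ)
    (S : lp (fun _ : V => ℂ) 2 →L[ℂ] lp (fun _ : V => ℂ) 2)
    (hS : ∀ (f : lp (fun _ : V => ℂ) 2) (v : V), (S f) v = (wt v : ℂ) * f (T.par v))
    (hbal : ∀ u u' : V, (∃ n : ℕ, T.par^[n] u = T.par^[n] u') →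
      ‖S (lp.single 2 u (1 : ℂ))‖ = ‖S (lp.single 2 u' (1 : ℂ))‖)
    (k : ℕ) (w : lp (fun _ : V => ℂ) 2) (hw : adjoint S w = 0) :
    ∃ w' : lp (fun _ : V => ℂ) 2, adjoint S w' = 0 ∧
      adjoint S ((S ^ (k + 1)) w) = (S ^ k) w' := by
  have hmem : Memℓp (fun x : V => ((betaF S ((childFn T)^[k] x) : ℝ) : ℂ) * w x) 2 :=
    memℓp_mul S (fun x => betaF S ((childFn T)^[k] x)) (fun x => betaF_nonneg S _)
      (fun x => betaF_le S _) w
  set w' : lp (fun _ : V => ℂ) 2 := ⟨_, hmem⟩ with hw'def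
  have hw'apply : ∀ x : V, w' x = ((betaF S ((childFn T)^[k] x) : ℝ) : ℂ) * w x :=
    fun x => rfl
  have hkey : ∀ v x : V, T.par x = v →
      betaF S ((childFn T)^[k] x) = betaF S ((childFn T)^[k] (childFn T v)) := by
    intro v x hx
    apply betaF_eq_of_gen T S hbal
    refine ⟨k + 1, ?_⟩
    rw [Function.iterate_succ_apply' T.par, Function.iterate_succ_apply' T.par,
      par_iter_childFn, par_iter_childFn, hx, par_childFn]
  have hb0 : adjoint S w' = 0 := by
    apply lp.ext
    funext v
    rw [adjoint_apply_tsum T wt S hS]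
    have hrw : (fun x : V => if T.par x = v then (wt x : ℂ) * w' x else 0)
        = fun x : V => ((betaF S ((childFn T)^[k] (childFn T v)) : ℝ) : ℂ) *
            (if T.par x = v then (wt x : ℂ) * w x else 0) := by
      funext x
      by_cases h : T.par x = v
      · rw [if_pos h, if_pos h, hw'apply, hkey v x h]
        ring
      · rw [if_neg h, if_neg h, mul_zero]
    rw [hrw, tsum_mul_left, ← adjoint_apply_tsum T wt S hS, hw]
    simp
  have hb1 : adjoint S ((S ^ (k + 1)) w) = (S ^ k) w' := by
    apply lp.ext
    funext v
    have hbv : betaF S ((childFn T)^[k] (T.par^[k] v)) = betaF S v := by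
      apply betaF_eq_of_gen T S hbal
      exact ⟨k, by rw [par_iter_childFn]⟩
    have hR : ((S ^ k) w') v
        = (lamN T wt k v : ℂ) * w (T.par^[k] v) * ((betaF S v : ℝ) : ℂ) := by
      rw [powApply T wt S hS, hw'apply, hbv]
      ring
    rw [hR, betaF_tsum T wt S hS v, ← tsum_mul_left, adjoint_apply_tsum T wt S hS]
    refine tsum_congr fun x => ?_
    by_cases h : T.par x = v
    · rw [if_pos h, if_pos h, powApply T wt S hS (k + 1) w x, lamN_succ,
        Function.iterate_succ_apply T.par, h]
      push_cast
      ring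
    · rw [if_neg h, if_neg h, mul_zero]
  exact ⟨w', hb0, hb1⟩

theorem keyL (T : RootlessTree V) (wt : V → ℝ)
    (S : lp (fun _ : V => ℂ) 2 →L[ℂ] lp (fun _ : V => ℂ) 2)
    (hS : ∀ (f : lp (fun _ : V => ℂ) 2) (v : V), (S f) v = (wt v : ℂ) * f (T.par v))
    (hbal : ∀ u u' : V, (∃ n : ℕ, T.par^[n] u = T.par^[n] u') →
      ‖S (lp.single 2 u (1 : ℂ))‖ = ‖S (lp.single 2 u' (1 : ℂ))‖) :
    ∀ (k : ℕ) (w : lp (fun _ : V => ℂ) 2), adjoint S w = 0 →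
      ∀ (m : ℕ) (z : lp (fun _ : V => ℂ) 2),
      (inner ℂ ((S ^ (k + m + 1)) z) ((S ^ k) w) : ℂ) = 0 := by
  intro k
  induction k with
  | zero =>
      intro w hw m z
      rw [pow_zero, ContinuousLinearMap.one_apply, zero_add, pow_succ',
        ContinuousLinearMap.mul_apply, ← ContinuousLinearMap.adjoint_inner_right, hw,
        inner_zero_right]
  | succ k ih =>
      intro w hw m z
      obtain ⟨w', hw'0, hw'⟩ := keyF2 T wt S hS hbal k w hw
      have harith : k + 1 + m + 1 = (k + m + 1) + 1 := by ring
      rw [harith, pow_succ', ContinuousLinearMap.mul_apply,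
        ← ContinuousLinearMap.adjoint_inner_right, hw']
      exact ih w' hw'0 m z

end Key


set_option maxHeartbeats 2000000 in
/-- Wold-type decomposition for a bounded left-invertible, non-analytic, balanced
weighted shift: `ℓ²(V)` is the orthogonal direct sum of the hyper-range
`S_λ^∞(ℓ²(V))` and the subspaces `S_λⁿ(ker S_λ*)`, `n ∈ ℕ`. -/
theorem stmt19 {V : Type*} [Countable V] [Infinite V] [DecidableEq V] (T : RootlessTree V)
    (wt : V → ℝ) (hwt : ∀ u : V, 0 < wt u)
    (S : lp (fun _ : V => ℂ) 2 →L[ℂ] lp (fun _ : V => ℂ) 2)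
    (hS : ∀ (f : lp (fun _ : V => ℂ) 2) (v : V), (S f) v = (wt v : ℂ) * f (T.par v))
    (hleft : ∃ c : ℝ, 0 < c ∧ ∀ f : lp (fun _ : V => ℂ) 2, c * ‖f‖ ≤ ‖S f‖)
    (hbal : ∀ u u' : V, (∃ n : ℕ, T.par^[n] u = T.par^[n] u') →
      ‖S (lp.single 2 u (1 : ℂ))‖ = ‖S (lp.single 2 u' (1 : ℂ))‖)
    (hnonanalytic : (⨅ n : ℕ, LinearMap.range (S ^ n).toLinearMap) ≠ ⊥) :
    (∀ n : ℕ, ∀ x ∈ ⨅ k : ℕ, LinearMap.range (S ^ k).toLinearMap,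
        ∀ y ∈ Submodule.map (S ^ n).toLinearMap (LinearMap.ker (adjoint S).toLinearMap), (inner ℂ x y : ℂ) = 0) ∧
      (∀ m n : ℕ, m ≠ n →
        ∀ x ∈ Submodule.map (S ^ m).toLinearMap (LinearMap.ker (adjoint S).toLinearMap),
          ∀ y ∈ Submodule.map (S ^ n).toLinearMap (LinearMap.ker (adjoint S).toLinearMap),
            (inner ℂ x y : ℂ) = 0) ∧
      ((⨅ k : ℕ, LinearMap.range (S ^ k).toLinearMap) ⊔
          (⨆ n : ℕ, Submodule.map (S ^ n).toLinearMap (LinearMap.ker (adjoint S).toLinearMap))).topologicalClosure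
        = ⊤ := by
  obtain ⟨c, hc, hcS⟩ := hleft
  have part1 : ∀ n : ℕ, ∀ x ∈ ⨅ k : ℕ, LinearMap.range (S ^ k).toLinearMap,
      ∀ y ∈ Submodule.map (S ^ n).toLinearMap (LinearMap.ker (adjoint S).toLinearMap), (inner ℂ x y : ℂ) = 0 := by
    intro n x hxA y hy
    obtain ⟨w, hw, rfl⟩ := hy
    have hw0 : adjoint S w = 0 := LinearMap.mem_ker.mp hw
    have hx : x ∈ LinearMap.range (S ^ (n + 1)).toLinearMap := (Submodule.mem_iInf _).mp hxA (n + 1)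
    obtain ⟨z, rfl⟩ := hx
    have := keyL T wt S hS hbal n w hw0 0 z
    exact this
  refine ⟨part1, ?_, ?_⟩
  · -- part 2
    intro m n hmn x hx y hy
    obtain ⟨w1, hw1, rfl⟩ := hx
    obtain ⟨w2, hw2, rfl⟩ := hy
    rcases lt_or_gt_of_ne hmn with h | h
    · have harith : m + (n - m - 1) + 1 = n := by omega
      have h0 := keyL T wt S hS hbal m w1 (LinearMap.mem_ker.mp hw1) (n - m - 1) w2
      rw [harith] at h0
      rw [← inner_conj_symm]
      exact (congrArg (starRingEnd ℂ) h0).trans (map_zero _)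
    · have harith : n + (m - n - 1) + 1 = m := by omega
      have h0 := keyL T wt S hS hbal n w2 (LinearMap.mem_ker.mp hw2) (m - n - 1) w1
      rw [harith] at h0
      exact h0
  · -- part 3
    have hanti : AntilipschitzWith (c⁻¹).toNNReal S := by
      apply S.antilipschitz_of_bound
      intro x
      rw [Real.coe_toNNReal _ (inv_nonneg.mpr hc.le)]
      rw [inv_mul_eq_div, le_div_iff₀ hc]
      calc ‖x‖ * c = c * ‖x‖ := mul_comm _ _
        _ ≤ ‖S x‖ := hcS x
    have hclosed : IsClosed (Set.range S) := hanti.isClosed_range S.uniformContinuous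
    have hclosed' : IsClosed ((LinearMap.range S.toLinearMap : Submodule ℂ (lp (fun _ : V => ℂ) 2)) :
        Set (lp (fun _ : V => ℂ) 2)) := by
      rw [LinearMap.coe_range]
      exact hclosed
    haveI : CompleteSpace (LinearMap.range S.toLinearMap : Submodule ℂ (lp (fun _ : V => ℂ) 2)) :=
      hclosed'.completeSpace_coe
    have hdecomp : ∀ z : lp (fun _ : V => ℂ) 2, ∃ (e u : lp (fun _ : V => ℂ) 2),
        adjoint S e = 0 ∧ z = e + S u := by
      intro z
      set R : Submodule ℂ (lp (fun _ : V => ℂ) 2) := LinearMap.range S.toLinearMap with hR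
      have hmem : ((R.orthogonalProjectionOnto z : lp (fun _ : V => ℂ) 2)) ∈ R :=
        SetLike.coe_mem _
      obtain ⟨u, hu⟩ := hmem
      have he : z - (R.orthogonalProjectionOnto z : lp (fun _ : V => ℂ) 2) ∈ Rᗮ :=
        R.sub_starProjection_mem_orthogonal z
      refine ⟨z - (R.orthogonalProjectionOnto z : lp (fun _ : V => ℂ) 2), u, ?_, by rw [show S u = _ from hu]; abel⟩
      have h0 : (inner ℂ (adjoint S (z - (R.orthogonalProjectionOnto z : lp (fun _ : V => ℂ) 2)))
          (adjoint S (z - (R.orthogonalProjectionOnto z : lp (fun _ : V => ℂ) 2))) : ℂ) = 0 := by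
        rw [ContinuousLinearMap.adjoint_inner_left]
        exact Submodule.inner_left_of_mem_orthogonal
          (LinearMap.mem_range_self S.toLinearMap _) he
      exact inner_self_eq_zero.mp h0
    rw [Submodule.topologicalClosure_eq_top_iff, Submodule.eq_bot_iff]
    intro x hx
    have hx' : ∀ y ∈ ((⨅ k : ℕ, LinearMap.range (S ^ k).toLinearMap) ⊔
        (⨆ n : ℕ, Submodule.map (S ^ n).toLinearMap (LinearMap.ker (adjoint S).toLinearMap))),
        (inner ℂ y x : ℂ) = 0 := fun y hy => (Submodule.mem_orthogonal _ x).mp hx y hy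
    have hclaim : ∀ n : ℕ, ∃ z, (S ^ n) z = x := by
      intro n
      induction n with
      | zero => exact ⟨x, by simp⟩
      | succ n ih =>
          obtain ⟨z, hz⟩ := ih
          obtain ⟨e, u, he, hzd⟩ := hdecomp z
          have h1 : (S ^ n) e ∈ ⨆ n : ℕ, Submodule.map (S ^ n).toLinearMap (LinearMap.ker (adjoint S).toLinearMap) :=
            Submodule.mem_iSup_of_mem n ⟨e, LinearMap.mem_ker.mpr he, rfl⟩
          have h2 : (inner ℂ ((S ^ n) e) x : ℂ) = 0 := hx' _ (Submodule.mem_sup_right h1)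
          have h3 : (inner ℂ ((S ^ (n + 1)) u) ((S ^ n) e) : ℂ) = 0 := by
            have := keyL T wt S hS hbal n e he 0 u
            simpa using this
          have hx_eq : x = (S ^ n) e + (S ^ (n + 1)) u := by
            rw [← hz, hzd, map_add, pow_succ, ContinuousLinearMap.mul_apply]
          have h4 : (inner ℂ ((S ^ n) e) ((S ^ n) e) : ℂ) = 0 := by
            have h5 : (inner ℂ ((S ^ n) e) x : ℂ)
                = (inner ℂ ((S ^ n) e) ((S ^ n) e) : ℂ)
                  + (inner ℂ ((S ^ n) e) ((S ^ (n + 1)) u) : ℂ) := by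
              rw [hx_eq, inner_add_right]
            rw [h2] at h5
            have h6 : (inner ℂ ((S ^ n) e) ((S ^ (n + 1)) u) : ℂ) = 0 := by
              rw [← inner_conj_symm, h3, map_zero]
            rw [h6, add_zero] at h5
            exact h5.symm
          have h7 : (S ^ n) e = 0 := inner_self_eq_zero.mp h4
          exact ⟨u, by rw [hx_eq, h7, zero_add]⟩
    have hxA : x ∈ ⨅ k : ℕ, LinearMap.range (S ^ k).toLinearMap :=
      (Submodule.mem_iInf _).mpr fun k => LinearMap.mem_range.mpr (hclaim k)
    have hxx : (inner ℂ x x : ℂ) = 0 := hx' x (Submodule.mem_sup_left hxA)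
    exact inner_self_eq_zero.mp hxx
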